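/- Let S be a numerical semigroup with S ≠ ℕ. Then A(S̃) has at most one small atom. Moreover, if S has more than one small atom, then A(S̃) has no small atoms, i.e., A(S̃) = {0} ∪ {n : n ≥ F(S̃) + 1}. -/
import Mathlib


open Set

def IsNumericalSet (S : Set ℕ) : Prop := 0 ∈ S ∧ Sᶜ.Finite

def IsNumericalSemigroup (S : Set ℕ) : Prop :=
  IsNumericalSet S ∧ ∀ a ∈ S, ∀ b ∈ S, a + b ∈ S

/-- The associated set `A(S) = {s ∈ S : s + S ⊆ S}`. -/
def A (S : Set ℕ) : Set ℕ := {s ∈ S | ∀ t ∈ S, s + t ∈ S}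

/-- The Frobenius number: the largest gap of `S`. -/
noncomputable def F (S : Set ℕ) : ℕ := sSup Sᶜ

/-- The base: the largest element of `S` below `F S`. -/
noncomputable def B (S : Set ℕ) : ℕ := sSup {s | s ∈ S ∧ s < F S}

/-- The multiplicity: the smallest positive element of `S`. -/
noncomputable def m (S : Set ℕ) : ℕ := sInf {s | s ∈ S ∧ 0 < s}

/-- The complement numerical set (for `S ≠ ℕ`). -/
noncomputable def Stilde (S : Set ℕ) : Set ℕ :=
  {x | ∃ s ∈ S, s ≤ B S ∧ x = B S - s} ∪ {n | B S ≤ n}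

-- The complement operation, with the convention that the complement of ℕ is ℕ.
open Classical in
noncomputable def complOp (S : Set ℕ) : Set ℕ :=
  if S = Set.univ then Set.univ else Stilde S

/-- The genus: the number of gaps. -/
noncomputable def genus (S : Set ℕ) : ℕ := Sᶜ.ncard

/-- The number of boxes with hook length 1. -/
noncomputable def c1 (S : Set ℕ) : ℕ := {n | n ∈ S ∧ n + 1 ∉ S}.ncard

/-- An atom: a positive element not a sum of two positive elements. -/
def IsAtomOf (S : Set ℕ) (a : ℕ) : Prop :=
  a ∈ S ∧ 0 < a ∧ ¬ ∃ x ∈ S, ∃ y ∈ S, 0 < x ∧ 0 < y ∧ a = x + y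

/-- A small atom: an atom smaller than the Frobenius number. -/
def IsSmallAtom (S : Set ℕ) (a : ℕ) : Prop := IsAtomOf S a ∧ a < F S

/-- The embedding dimension: the number of atoms. -/
noncomputable def numAtoms (S : Set ℕ) : ℕ := {a | IsAtomOf S a}.ncard

/-- Maximal embedding dimension. -/
def MaxED (S : Set ℕ) : Prop := numAtoms S = m S


namespace Scratch

variable {S : Set ℕ}

section Basic

lemma hadd (hS : IsNumericalSemigroup S) {a b : ℕ} (ha : a ∈ S) (hb : b ∈ S) : a + b ∈ S :=
  hS.2 a ha b hb

lemma compl_nonempty (hne : S ≠ Set.univ) : Sᶜ.Nonempty := by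
  rcases Set.eq_empty_or_nonempty Sᶜ with h | h
  · exact absurd (compl_empty_iff.mp h) hne
  · exact h

lemma F_notMem (hS : IsNumericalSemigroup S) (hne : S ≠ Set.univ) : F S ∉ S :=
  (compl_nonempty hne).csSup_mem hS.1.2

lemma le_F (hS : IsNumericalSemigroup S) {n : ℕ} (hn : n ∉ S) : n ≤ F S :=
  le_csSup hS.1.2.bddAbove hn

lemma mem_of_F_lt (hS : IsNumericalSemigroup S) {n : ℕ} (h : F S < n) : n ∈ S := by
  by_contra hn
  exact absurd (le_F hS hn) (not_le.mpr h)

lemma F_pos (hS : IsNumericalSemigroup S) (hne : S ≠ Set.univ) : 0 < F S := by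
  rcases Nat.eq_zero_or_pos (F S) with h | h
  · exact absurd (h ▸ hS.1.1) (F_notMem hS hne)
  · exact h

lemma m_mem (hS : IsNumericalSemigroup S) : m S ∈ S ∧ 0 < m S :=
  Nat.sInf_mem (⟨F S + 1, mem_of_F_lt hS (Nat.lt_succ_self _), Nat.succ_pos _⟩ :
    {s | s ∈ S ∧ 0 < s}.Nonempty)

lemma m_le (hS : IsNumericalSemigroup S) {s : ℕ} (hs : s ∈ S) (hp : 0 < s) : m S ≤ s :=
  Nat.sInf_le ⟨hs, hp⟩

lemma two_le_m (hS : IsNumericalSemigroup S) (hne : S ≠ Set.univ) : 2 ≤ m S := by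
  rcases (m_mem hS) with ⟨hm, hp⟩
  by_contra h
  have h1 : m S = 1 := by omega
  have hall : ∀ n, n ∈ S := by
    intro n
    induction n with
    | zero => exact hS.1.1
    | succ k ih => exact hadd hS ih (h1 ▸ hm)
  exact hne (Set.eq_univ_of_forall hall)

lemma Bset_fin : {s | s ∈ S ∧ s < F S}.Finite :=
  (Set.finite_Iio (F S)).subset (fun s hs => hs.2)

lemma B_mem (hS : IsNumericalSemigroup S) (hne : S ≠ Set.univ) : B S ∈ S ∧ B S < F S :=
  Set.Nonempty.csSup_mem (⟨0, hS.1.1, F_pos hS hne⟩ : {s | s ∈ S ∧ s < F S}.Nonempty) Bset_fin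

lemma le_B (hS : IsNumericalSemigroup S) {s : ℕ} (hs : s ∈ S) (h : s < F S) : s ≤ B S :=
  le_csSup Bset_fin.bddAbove ⟨hs, h⟩

lemma F_lt_of_B_lt (hS : IsNumericalSemigroup S) (hne : S ≠ Set.univ) {s : ℕ}
    (hs : s ∈ S) (h : B S < s) : F S < s := by
  by_contra hle
  have h1 : s ≠ F S := fun he => (F_notMem hS hne) (he ▸ hs)
  have : s < F S := by omega
  exact absurd (le_B hS hs this) (not_le.mpr h)

lemma mult_mem (hS : IsNumericalSemigroup S) : ∀ k : ℕ, m S * k ∈ S := by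
  intro k
  induction k with
  | zero => simpa using hS.1.1
  | succ j ih =>
      have := hadd hS ih (m_mem hS).1
      simpa [Nat.mul_succ] using this

lemma mem_of_m_dvd (hS : IsNumericalSemigroup S) {w : ℕ} (h : m S ∣ w) : w ∈ S := by
  obtain ⟨k, rfl⟩ := h
  exact mult_mem hS k

lemma notMem_of_lt_m (hS : IsNumericalSemigroup S) {g : ℕ} (h0 : 0 < g) (h : g < m S) :
    g ∉ S := fun hg => absurd (m_le hS hg h0) (not_le.mpr h)

end Basic


section StildeChar

lemma mem_Stilde_iff (x : ℕ) : x ∈ Stilde S ↔ B S ≤ x ∨ B S - x ∈ S := by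
  constructor
  · rintro (⟨s, hs, hsB, rfl⟩ | h)
    · right
      rwa [Nat.sub_sub_self hsB]
    · left
      exact h
  · rintro (h | h)
    · exact Or.inr h
    · by_cases hxB : B S ≤ x
      · exact Or.inr hxB
      · exact Or.inl ⟨B S - x, h, Nat.sub_le _ _, (Nat.sub_sub_self (le_of_not_ge hxB)).symm⟩

lemma mem_A_iff {T : Set ℕ} (x : ℕ) : x ∈ A T ↔ x ∈ T ∧ ∀ t ∈ T, x + t ∈ T := Iff.rfl

lemma memT_high {x : ℕ} (h : B S ≤ x) : x ∈ A (Stilde S) := by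
  rw [mem_A_iff]
  constructor
  · exact (mem_Stilde_iff x).mpr (Or.inl h)
  · intro t _
    exact (mem_Stilde_iff _).mpr (Or.inl (by omega))

lemma zero_mem_T (hS : IsNumericalSemigroup S) (hne : S ≠ Set.univ) : 0 ∈ A (Stilde S) := by
  rw [mem_A_iff]
  constructor
  · exact (mem_Stilde_iff 0).mpr (Or.inr (by simpa using (B_mem hS hne).1))
  · intro t ht
    simpa using ht

lemma memT_low (hS : IsNumericalSemigroup S) (hne : S ≠ Set.univ) {x : ℕ} (hx : x < B S) :
    x ∈ A (Stilde S) ↔ ∀ s ∈ S, x < s → s ≤ B S → s - x ∈ S := by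
  constructor
  · rintro ⟨_, haddT⟩ s hs hxs hsB
    have ht : B S - s ∈ Stilde S :=
      (mem_Stilde_iff _).mpr (Or.inr (by rwa [Nat.sub_sub_self hsB]))
    have h2 := haddT (B S - s) ht
    rw [mem_Stilde_iff] at h2
    rcases h2 with h2 | h2
    · omega
    · have he : B S - (x + (B S - s)) = s - x := by omega
      rwa [he] at h2
  · intro hP
    rw [mem_A_iff]
    have hBS := (B_mem hS hne).1
    constructor
    · exact (mem_Stilde_iff x).mpr (Or.inr (hP (B S) hBS hx le_rfl))
    · intro t ht
      rw [mem_Stilde_iff] at ht ⊢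
      rcases ht with ht | ht
      · exact Or.inl (by omega)
      · by_cases hxt : B S ≤ x + t
        · exact Or.inl hxt
        · right
          have h1 : x < B S - t := by omega
          have h2 := hP (B S - t) ht h1 (Nat.sub_le _ _)
          have he : B S - (x + t) = B S - t - x := by omega
          rwa [he]

end StildeChar

section Induction

/-- If all small atoms below `c` equal `m`, every element of `S` below `c ≤ F` is a
multiple of `m`. -/
lemma mult_of_lt (hS : IsNumericalSemigroup S) {c : ℕ} (hc : c ≤ F S)
    (hatom : ∀ a, IsSmallAtom S a → a < c → a = m S) :
    ∀ s, s ∈ S → 0 < s → s < c → m S ∣ s := by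
  intro s
  induction s using Nat.strong_induction_on with
  | _ s ih =>
    intro hs hpos hsc
    by_cases hat : IsAtomOf S s
    · have hsmall : IsSmallAtom S s := ⟨hat, lt_of_lt_of_le hsc hc⟩
      rw [hatom s hsmall hsc]
    · unfold IsAtomOf at hat
      push_neg at hat
      obtain ⟨u, huS, v, hvS, hup, hvp, hsum⟩ := hat hs hpos
      have h1 := ih u (by omega) huS hup (by omega)
      have h2 := ih v (by omega) hvS hvp (by omega)
      exact hsum ▸ Nat.dvd_add h1 h2

/-- Witness construction: for any positive `x ∈ S` with `x + a2 ≤ B`, there is a gap `g < a2`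
with `x + g ∈ S`. -/
lemma star2 (hS : IsNumericalSemigroup S) {a2 : ℕ}
    (ha2S : a2 ∈ S) (ha2atom : IsAtomOf S a2) (hma2 : m S < a2) :
    ∀ x, x ∈ S → 0 < x → x + a2 ≤ B S →
      ∃ g, g ∉ S ∧ 0 < g ∧ g < a2 ∧ x + g ∈ S := by
  have hga2m : a2 - m S ∉ S := by
    intro hmem
    exact ha2atom.2.2 ⟨m S, (m_mem hS).1, a2 - m S, hmem, (m_mem hS).2, by omega, by omega⟩
  intro x
  induction x using Nat.strong_induction_on with
  | _ x ih =>
    intro hxS hx hxa2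
    have hmpos := (m_mem hS).2
    by_cases hdvd : m S ∣ x
    · refine ⟨a2 - m S, hga2m, by omega, by omega, ?_⟩
      have hmx : m S ≤ x := Nat.le_of_dvd hx hdvd
      have hxm : x - m S ∈ S := mem_of_m_dvd hS ((Nat.dvd_sub hdvd dvd_rfl))
      have he : x + (a2 - m S) = (x - m S) + a2 := by omega
      rw [he]
      exact hadd hS hxm ha2S
    · by_cases hat : IsAtomOf S x
      · have hmpos := (m_mem hS).2
        have hmod : 0 < x % m S := Nat.pos_of_ne_zero (fun h => hdvd (Nat.dvd_of_mod_eq_zero h))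
        have hmodlt : x % m S < m S := Nat.mod_lt _ hmpos
        refine ⟨m S - x % m S, notMem_of_lt_m hS (by omega) (by omega), by omega, by omega, ?_⟩
        have hq := Nat.div_add_mod x (m S)
        have hmem : m S * (x / m S + 1) ∈ S := mult_mem hS _
        have he : x + (m S - x % m S) = m S * (x / m S + 1) := by
          rw [Nat.mul_succ]
          omega
        rwa [he]
      · unfold IsAtomOf at hat
        push_neg at hat
        obtain ⟨u, huS, v, hvS, hup, hvp, hsum⟩ := hat hxS hx
        obtain ⟨g, hg1, hg2, hg3, hg4⟩ := ih v (by omega) hvS hvp (by omega)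
        refine ⟨g, hg1, hg2, hg3, ?_⟩
        have he : x + g = u + (v + g) := by omega
        rw [he]
        exact hadd hS huS hg4

lemma not_m_dvd_a2 (hS : IsNumericalSemigroup S) {a2 : ℕ}
    (ha2atom : IsAtomOf S a2) (hma2 : m S < a2) : ¬ m S ∣ a2 := by
  rintro ⟨k, hk⟩
  have hmpos := (m_mem hS).2
  have hk2 : 2 ≤ k := by nlinarith [hk, hma2]
  have hmem : m S * (k - 1) ∈ S := mult_mem hS _
  refine ha2atom.2.2 ⟨m S, (m_mem hS).1, m S * (k - 1), hmem, hmpos, ?_, ?_⟩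
  · have : 0 < m S * (k-1) := Nat.mul_pos hmpos (by omega)
    omega
  · have : m S * k = m S + m S * (k - 1) := by
      have h3 : m S * k = m S * (1 + (k-1)) := by congr 1; omega
      rw [h3, Nat.mul_add, Nat.mul_one]
    omega

/-- There is an element of S strictly between B - m and B, given a second small atom. -/
lemma exists_s0 (hS : IsNumericalSemigroup S) (hne : S ≠ Set.univ) {a2 : ℕ}
    (ha2S : a2 ∈ S) (ha2atom : IsAtomOf S a2) (hma2 : m S < a2) (ha2B : a2 ≤ B S) :
    ∃ s0, s0 ∈ S ∧ B S < s0 + m S ∧ s0 < B S := by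
  have hmpos := (m_mem hS).2
  have hmS := (m_mem hS).1
  have hBS := (B_mem hS hne).1
  have hBF := (B_mem hS hne).2
  -- t1 : largest multiple of m that is ≤ B
  set t1 := B S / m S * m S with ht1def
  have ht1le : t1 ≤ B S := Nat.div_mul_le_self _ _
  have ht1S : t1 ∈ S := mem_of_m_dvd hS (dvd_mul_left _ _)
  have ht1m : B S < t1 + m S := by
    have hq := Nat.div_add_mod (B S) (m S)
    have hcm : m S * (B S / m S) = B S / m S * m S := Nat.mul_comm _ _
    have := Nat.mod_lt (B S) hmpos
    omega
  -- t2 : largest element of a2 + mℕ that is ≤ B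
  set t2 := a2 + (B S - a2) / m S * m S with ht2def
  have ht2le : t2 ≤ B S := by
    have : (B S - a2) / m S * m S ≤ B S - a2 := Nat.div_mul_le_self _ _
    omega
  have ht2S : t2 ∈ S := hadd hS ha2S (mem_of_m_dvd hS (dvd_mul_left _ _))
  have ht2m : B S < t2 + m S := by
    have hq := Nat.div_add_mod (B S - a2) (m S)
    have hcm : m S * ((B S - a2) / m S) = (B S - a2) / m S * m S := Nat.mul_comm _ _
    have := Nat.mod_lt (B S - a2) hmpos
    omega
  have hne12 : t1 ≠ t2 := by
    intro he
    apply not_m_dvd_a2 hS ha2atom hma2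
    have h1 : m S ∣ t1 := dvd_mul_left _ _
    have h2 : m S ∣ (B S - a2) / m S * m S := dvd_mul_left _ _
    have h3 : m S ∣ t2 := he ▸ h1
    rw [ht2def] at h3
    have he2 : a2 = (a2 + (B S - a2) / m S * m S) - (B S - a2) / m S * m S := by omega
    rw [he2]
    exact Nat.dvd_sub h3 h2
  by_cases h1B : t1 < B S
  · exact ⟨t1, ht1S, ht1m, h1B⟩
  · have : t1 = B S := by omega
    refine ⟨t2, ht2S, ht2m, by omega⟩

end Induction

section Kill

/-- If P x holds for 0 < x < B, then x ∈ S and m ≤ B - x. -/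
lemma mem_S_of_P (hS : IsNumericalSemigroup S) (hne : S ≠ Set.univ) {x : ℕ}
    (hx : 0 < x) (hxB : x < B S)
    (hP : ∀ s ∈ S, x < s → s ≤ B S → s - x ∈ S) :
    x ∈ S ∧ x + m S ≤ B S := by
  have hmpos := (m_mem hS).2
  have hmS := (m_mem hS).1
  have hBS := (B_mem hS hne).1
  have hyS : B S - x ∈ S := hP (B S) hBS hxB le_rfl
  have hym : m S ≤ B S - x := m_le hS hyS (by omega)
  refine ⟨?_, by omega⟩
  by_contra hxS
  -- t : largest element of S that is ≤ x
  have htfin : {s | s ∈ S ∧ s ≤ x}.Finite := (Set.finite_Iic x).subset (fun s hs => hs.2)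
  have htne : {s | s ∈ S ∧ s ≤ x}.Nonempty := ⟨0, hS.1.1, Nat.zero_le _⟩
  set t := sSup {s | s ∈ S ∧ s ≤ x} with htdef
  have htmem : t ∈ S ∧ t ≤ x := htne.csSup_mem htfin
  have htmax : ∀ s, s ∈ S → s ≤ x → s ≤ t := fun s hs hsx => le_csSup htfin.bddAbove ⟨hs, hsx⟩
  have htlt : t < x := lt_of_le_of_ne htmem.2 (fun he => hxS (he ▸ htmem.1))
  have htmS : t + m S ∈ S := hadd hS htmem.1 hmS
  have htmx : x < t + m S := by
    by_contra hle
    have := htmax _ htmS (by omega)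
    omega
  have hd : (t + m S) - x ∈ S := hP (t + m S) htmS htmx (by omega)
  have := m_le hS hd (by omega)
  omega

/-- With a second small atom a2, no x with 0 < x < B satisfies P x. -/
lemma kill (hS : IsNumericalSemigroup S) (hne : S ≠ Set.univ) {a2 : ℕ}
    (ha2small : IsSmallAtom S a2) (hma2 : m S < a2)
    (hmin : ∀ a, IsSmallAtom S a → a < a2 → a = m S) :
    ∀ x, 0 < x → x < B S → ¬ (∀ s ∈ S, x < s → s ≤ B S → s - x ∈ S) := by
  have hmpos := (m_mem hS).2
  have hmS := (m_mem hS).1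
  have hBS := (B_mem hS hne).1
  have hBF := (B_mem hS hne).2
  have ha2S := ha2small.1.1
  have ha2F := ha2small.2
  have ha2B : a2 ≤ B S := le_B hS ha2S ha2F
  intro x hx hxB hP
  obtain ⟨hxS, hxmB⟩ := mem_S_of_P hS hne hx hxB hP
  by_cases hxa : x + a2 ≤ B S
  · obtain ⟨g, hg1, hg2, hg3, hg4⟩ := star2 hS ha2S ha2small.1 hma2 x hxS hx hxa
    have := hP (x + g) hg4 (by omega) (by omega)
    rw [Nat.add_sub_cancel_left] at this
    exact hg1 this
  · -- B < x + a2 : here B - x is a positive multiple of m below a2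
    have hyS : B S - x ∈ S := hP (B S) hBS hxB le_rfl
    have hya : B S - x < a2 := by omega
    have hdvd1 : m S ∣ B S - x :=
      mult_of_lt hS (le_of_lt ha2F) hmin _ hyS (by omega) hya
    obtain ⟨s0, hs0S, hs0m, hs0B⟩ := exists_s0 hS hne ha2S ha2small.1 hma2 ha2B
    have hs0x : x < s0 := by omega
    have hdS : s0 - x ∈ S := hP s0 hs0S hs0x (le_of_lt hs0B)
    have hdvd2 : m S ∣ s0 - x :=
      mult_of_lt hS (le_of_lt ha2F) hmin _ hdS (by omega) (by omega)
    obtain ⟨j, hj⟩ := hdvd1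
    obtain ⟨i, hi⟩ := hdvd2
    have hij : i < j := by
      have hlt : m S * i < m S * j := by omega
      exact Nat.lt_of_mul_lt_mul_left hlt
    have hmul : m S * i + m S ≤ m S * j := by
      have h4 : m S * (i + 1) ≤ m S * j := Nat.mul_le_mul_left _ (by omega)
      have h5 : m S * (i + 1) = m S * i + m S := Nat.mul_succ _ _
      omega
    omega

end Kill

section Unique

lemma multT (hS : IsNumericalSemigroup S) (hne : S ≠ Set.univ)
    (hu : ∀ a, IsSmallAtom S a → a = m S) {w : ℕ} (hw : m S ∣ w) (hwB : w < B S) :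
    w ∈ A (Stilde S) := by
  rw [memT_low hS hne hwB]
  intro s hs hws hsB
  have hBF := (B_mem hS hne).2
  have hsdvd : m S ∣ s :=
    mult_of_lt hS le_rfl (fun b hb _ => hu b hb) s hs (by omega) (by omega)
  exact mem_of_m_dvd hS (Nat.dvd_sub hsdvd hw)

lemma T_atoms_unique (hS : IsNumericalSemigroup S) (hne : S ≠ Set.univ)
    (hu : ∀ a, IsSmallAtom S a → a = m S) :
    {a | IsSmallAtom (A (Stilde S)) a} ⊆ {m S} := by
  intro a ha
  obtain ⟨⟨haT, hapos, hanot⟩, haF⟩ := ha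
  have hBF := (B_mem hS hne).2
  have hmpos := (m_mem hS).2
  -- a < B S
  have hTc : ∀ n, n ∉ A (Stilde S) → n < B S := by
    intro n hn
    by_contra h
    exact hn (memT_high (by omega))
  have haB : a < B S := by
    rcases Set.eq_empty_or_nonempty (A (Stilde S))ᶜ with hemp | hne2
    · exfalso
      have : F (A (Stilde S)) = 0 := by
        simp [F, hemp]
      omega
    · have hfin : (A (Stilde S))ᶜ.Finite :=
        (Set.finite_Iio (B S)).subset (fun n hn => hTc n hn)
      have hFTmem : F (A (Stilde S)) ∈ (A (Stilde S))ᶜ := hne2.csSup_mem hfin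
      have := hTc _ hFTmem
      omega
  have hPa := (memT_low hS hne haB).mp haT
  obtain ⟨haS, hamB⟩ := mem_S_of_P hS hne hapos haB hPa
  have hdvd : m S ∣ a :=
    mult_of_lt hS le_rfl (fun b hb _ => hu b hb) a haS hapos (by omega)
  obtain ⟨k, hk⟩ := hdvd
  have hk1 : 1 ≤ k := by
    rcases Nat.eq_zero_or_pos k with h | h
    · rw [h, Nat.mul_zero] at hk
      omega
    · omega
  rcases eq_or_lt_of_le hk1 with h1 | h2
  · simp [Set.mem_singleton_iff, hk, ← h1]
  · exfalso
    have hdecomp : m S * k = m S + m S * (k - 1) := by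
      have h3 : m S * k = m S * (1 + (k - 1)) := by congr 1; omega
      rw [h3, Nat.mul_add, Nat.mul_one]
    have hm1pos : 0 < m S * (k - 1) := Nat.mul_pos hmpos (by omega)
    have hmlt : m S < B S := by omega
    have hm1lt : m S * (k - 1) < B S := by omega
    exact hanot ⟨m S, multT hS hne hu (dvd_refl _) hmlt, m S * (k - 1),
      multT hS hne hu (Dvd.intro _ rfl) hm1lt, hmpos, hm1pos, by omega⟩

end Unique

theorem main (S : Set ℕ) (hS : IsNumericalSemigroup S)
    (hne : S ≠ Set.univ) :
    {a | IsSmallAtom (A (Stilde S)) a}.ncard ≤ 1 ∧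
      (2 ≤ {a | IsSmallAtom S a}.ncard →
        A (Stilde S) = {0} ∪ {n | F (Stilde S) + 1 ≤ n}) := by
  have hmpos := (m_mem hS).2
  have hm2 := two_le_m hS hne
  have hBS := (B_mem hS hne).1
  have hBF := (B_mem hS hne).2
  by_cases hB0 : B S = 0
  · -- degenerate case : S = {0} ∪ (F, ∞)
    constructor
    · have hSt : Stilde S = Set.univ :=
        Set.eq_univ_of_forall (fun n => Set.mem_union_right _ (by simp [hB0] : B S ≤ n))
      have hT : A (Stilde S) = Set.univ := by
        rw [hSt]
        exact Set.eq_univ_of_forall (fun n => ⟨Set.mem_univ n, fun t _ => Set.mem_univ _⟩)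
      have hFT : F (A (Stilde S)) = 0 := by
        simp [F, hT]
      have hempty : {a | IsSmallAtom (A (Stilde S)) a} = ∅ := by
        apply Set.eq_empty_iff_forall_notMem.mpr
        rintro a ⟨_, hlt⟩
        omega
      rw [hempty]
      simp
    · intro h2
      exfalso
      obtain ⟨b, hb, _⟩ := Set.exists_ne_of_one_lt_ncard (s := {a | IsSmallAtom S a}) (by omega) 0
      have hbB : b ≤ B S := le_B hS hb.1.1 hb.2
      have := hb.1.2.1
      omega
  · have hBpos : 0 < B S := by omega
    have hmB : m S ≤ B S := m_le hS hBS hBpos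
    by_cases hu : ∀ a, IsSmallAtom S a → a = m S
    · constructor
      · have hsub := T_atoms_unique hS hne hu
        have := Set.ncard_le_ncard hsub (Set.finite_singleton (m S))
        simpa using this
      · intro h2
        exfalso
        obtain ⟨b, hb, hbne⟩ := Set.exists_ne_of_one_lt_ncard (s := {a | IsSmallAtom S a}) (by omega) (m S)
        exact hbne (hu b hb)
    · push_neg at hu
      obtain ⟨a0, ha0small, ha0ne⟩ := hu
      have hA2ne : {a | IsSmallAtom S a ∧ a ≠ m S}.Nonempty := ⟨a0, ha0small, ha0ne⟩
      set a2 := sInf {a | IsSmallAtom S a ∧ a ≠ m S} with ha2def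
      have ha2 : IsSmallAtom S a2 ∧ a2 ≠ m S := Nat.sInf_mem hA2ne
      have hma2 : m S < a2 :=
        lt_of_le_of_ne (m_le hS ha2.1.1.1 ha2.1.1.2.1) (Ne.symm ha2.2)
      have hmin : ∀ a, IsSmallAtom S a → a < a2 → a = m S := by
        intro a ha hlt
        by_contra hne'
        exact absurd (Nat.sInf_le (⟨ha, hne'⟩ : a ∈ {a | IsSmallAtom S a ∧ a ≠ m S}))
          (not_le.mpr hlt)
      have hkill := kill hS hne ha2.1 hma2 hmin
      have hTeq : A (Stilde S) = {0} ∪ {n | B S ≤ n} := by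
        ext n
        constructor
        · intro hn
          by_cases hn0 : n = 0
          · exact Or.inl (by simp [hn0])
          · by_cases hnB : n < B S
            · exact absurd ((memT_low hS hne hnB).mp hn) (hkill n (by omega) hnB)
            · exact Or.inr (show B S ≤ n by omega)
        · rintro (h0 | hB)
          · have : n = 0 := h0
            rw [this]
            exact zero_mem_T hS hne
          · exact memT_high hB
      constructor
      · have hempty : {a | IsSmallAtom (A (Stilde S)) a} = ∅ := by
          apply Set.eq_empty_iff_forall_notMem.mpr
          rintro a ⟨⟨haT, hapos, _⟩, haF⟩
          -- compute F of T
          have hFT : F (A (Stilde S)) = B S - 1 := by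
            have hmemc : B S - 1 ∈ (A (Stilde S))ᶜ := by
              intro hmem
              rw [hTeq] at hmem
              rcases hmem with h | h
              · have : B S - 1 = 0 := h
                omega
              · have : B S ≤ B S - 1 := h
                omega
            have hub : ∀ n ∈ (A (Stilde S))ᶜ, n ≤ B S - 1 := by
              intro n hn
              by_contra h
              exact hn (memT_high (by omega))
            exact le_antisymm (csSup_le ⟨_, hmemc⟩ hub)
              (le_csSup ⟨B S - 1, mem_upperBounds.mpr hub⟩ hmemc)
          rw [hTeq] at haT
          rcases haT with h | h
          · have : a = 0 := h
            omega
          · have : B S ≤ a := h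
            omega
        rw [hempty]
        simp
      · intro _
        have hFSt : F (Stilde S) = B S - 1 := by
          have hmemc : B S - 1 ∈ (Stilde S)ᶜ := by
            intro hmem
            rw [mem_Stilde_iff] at hmem
            rcases hmem with h | h
            · omega
            · have he : B S - (B S - 1) = 1 := by omega
              rw [he] at h
              exact notMem_of_lt_m hS (by omega) (by omega) h
          have hub : ∀ n ∈ (Stilde S)ᶜ, n ≤ B S - 1 := by
            intro n hn
            by_contra h
            exact hn ((mem_Stilde_iff n).mpr (Or.inl (by omega)))
          exact le_antisymm (csSup_le ⟨_, hmemc⟩ hub)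
            (le_csSup ⟨B S - 1, mem_upperBounds.mpr hub⟩ hmemc)
        have he : F (Stilde S) + 1 = B S := by omega
        rw [he]
        exact hTeq

end Scratch

theorem associated_of_complement_small_atoms (S : Set ℕ) (hS : IsNumericalSemigroup S)
    (hne : S ≠ Set.univ) :
    {a | IsSmallAtom (A (Stilde S)) a}.ncard ≤ 1 ∧
      (2 ≤ {a | IsSmallAtom S a}.ncard →
        A (Stilde S) = {0} ∪ {n | F (Stilde S) + 1 ≤ n}) := Scratch.main S hS hne
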